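/- Let β be a block in the transporter {w ∈ W : w·s' = s} with W_s° as in the block theory of a Coxeter group W (W_s° is a reflection subgroup which is a parabolic-type subgroup for the sub-root system Φ_s). Then β, with the Bruhat order induced from W, has a unique minimal element w_β and a unique maximal element w^β. -/

import Mathlib

set_option linter.unusedSectionVars false
namespace Stmt12Aux

open CoxeterSystem List

variable {B W : Type*} [Group W] {M : CoxeterMatrix B} (cs : CoxeterSystem M W)

local prefix:100 "σ" => cs.simple
local prefix:100 "π" => cs.wordProd
local prefix:100 "ℓ" => cs.length

open scoped Classical

/-- The basic permutation of `W × ℤˣ` attached to a simple reflection. -/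
noncomputable def permF (i : B) : Equiv.Perm (W × ℤˣ) where
  toFun p := (σ i * p.1 * σ i, (if p.1 = σ i then -1 else 1) * p.2)
  invFun p := (σ i * p.1 * σ i, (if p.1 = σ i then -1 else 1) * p.2)
  left_inv p := by
    ext
    · simp [← mul_assoc]
    · have : σ i * p.1 * σ i = σ i ↔ p.1 = σ i := by
        constructor
        · intro h
          have := congrArg (fun x => σ i * x * σ i) h
          simpa [← mul_assoc] using this
        · intro h; simp [h]
      simp only [this]
      by_cases h : p.1 = σ i <;> simp [h]
  right_inv p := by
    ext
    · simp [← mul_assoc]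
    · have : σ i * p.1 * σ i = σ i ↔ p.1 = σ i := by
        constructor
        · intro h
          have := congrArg (fun x => σ i * x * σ i) h
          simpa [← mul_assoc] using this
        · intro h; simp [h]
      simp only [this]
      by_cases h : p.1 = σ i <;> simp [h]

lemma permF_apply (i : B) (p : W × ℤˣ) :
    permF cs i p = (σ i * p.1 * σ i, (if p.1 = σ i then -1 else 1) * p.2) := rfl

lemma permF_mul_pow_apply (i j : B) (k : ℕ) (p : W × ℤˣ) :
    ((permF cs i * permF cs j) ^ k) p =
      ((σ i * σ j) ^ k * p.1 * ((σ i * σ j) ^ k)⁻¹,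
        (∏ l ∈ Finset.range (2 * k),
          (if p.1 = ((σ i * σ j)⁻¹) ^ l * σ j then (-1 : ℤˣ) else 1)) * p.2) := by
  induction k generalizing p with
  | zero => simp
  | succ k ih =>
      set z := σ i * σ j with hz
      have hstep : (permF cs i * permF cs j) p =
          (z * p.1 * z⁻¹,
            ((if p.1 = σ j then (-1 : ℤˣ) else 1) *
              (if p.1 = z⁻¹ * σ j then (-1 : ℤˣ) else 1)) * p.2) := by
        have h1 : (permF cs i * permF cs j) p = permF cs i (permF cs j p) := rfl
        rw [h1, permF_apply, permF_apply]
        have hc : (σ j * p.1 * σ j = σ i) ↔ (p.1 = z⁻¹ * σ j) := by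
          rw [hz]
          constructor
          · intro h
            have : p.1 = σ j * σ i * σ j := by
              have := congrArg (fun x => σ j * x * σ j) h
              simpa [← mul_assoc] using this
            rw [this]
            simp [mul_assoc]
          · intro h
            rw [h]
            simp [mul_assoc]
        rw [Prod.ext_iff]
        dsimp only
        constructor
        · simp [hz, mul_assoc]
        · simp only [hc]
          rw [mul_left_comm, ← mul_assoc]
      rw [pow_succ, Equiv.Perm.mul_apply, hstep, ih]
      have hcond : ∀ l : ℕ, ((z * p.1 * z⁻¹ = (z⁻¹) ^ l * σ j) ↔ (p.1 = (z⁻¹) ^ (l + 2) * σ j)) := by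
        intro l
        constructor
        · intro h
          have : p.1 = z⁻¹ * ((z⁻¹) ^ l * σ j) * z := by
            have := congrArg (fun x => z⁻¹ * x * z) h
            simpa [← mul_assoc] using this
          rw [this]
          have hjz : σ j * z = z⁻¹ * σ j := by
            rw [hz]; simp [mul_assoc]
          calc z⁻¹ * ((z⁻¹) ^ l * σ j) * z = (z⁻¹) ^ (l + 1) * (σ j * z) := by
                rw [pow_succ]; group
            _ = (z⁻¹) ^ (l + 1) * (z⁻¹ * σ j) := by rw [hjz]
            _ = (z⁻¹) ^ (l + 2) * σ j := by rw [pow_succ]; group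
        · intro h
          rw [h]
          have hjz : σ j * z = z⁻¹ * σ j := by
            rw [hz]; simp [mul_assoc]
          have : (z⁻¹) ^ (l + 2) * σ j = z⁻¹ * ((z⁻¹) ^ l * σ j) * z := by
            calc (z⁻¹) ^ (l + 2) * σ j = (z⁻¹) ^ (l + 1) * (z⁻¹ * σ j) := by rw [pow_succ]; group
              _ = (z⁻¹) ^ (l + 1) * (σ j * z) := by rw [hjz]
              _ = z⁻¹ * ((z⁻¹) ^ l * σ j) * z := by rw [pow_succ]; group
          rw [this]
          group
      rw [Prod.ext_iff]
      dsimp only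
      constructor
      · rw [pow_succ]
        group
      · have h2k : 2 * (k + 1) = 2 + 2 * k := by ring
        rw [h2k, Finset.prod_range_add]
        have e1 : (∏ l ∈ Finset.range 2, (if p.1 = (z⁻¹) ^ l * σ j then (-1 : ℤˣ) else 1)) =
            (if p.1 = σ j then (-1 : ℤˣ) else 1) * (if p.1 = z⁻¹ * σ j then (-1 : ℤˣ) else 1) := by
          rw [Finset.prod_range_succ, Finset.prod_range_succ, Finset.prod_range_zero]
          simp
        have e2 : (∏ l ∈ Finset.range (2 * k),
            (if z * p.1 * z⁻¹ = (z⁻¹) ^ l * σ j then (-1 : ℤˣ) else 1)) =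
            (∏ l ∈ Finset.range (2 * k),
            (if p.1 = (z⁻¹) ^ (2 + l) * σ j then (-1 : ℤˣ) else 1)) := by
          apply Finset.prod_congr rfl
          intro l _
          rw [if_congr (by rw [hcond l, add_comm]) rfl rfl]
        rw [e1, e2]
        rw [← mul_assoc]
        rw [mul_comm (∏ l ∈ Finset.range (2 * k),
            (if p.1 = (z⁻¹) ^ (2 + l) * σ j then (-1 : ℤˣ) else 1))
          ((if p.1 = σ j then (-1 : ℤˣ) else 1) * (if p.1 = z⁻¹ * σ j then (-1 : ℤˣ) else 1))]

lemma permF_liftable : M.IsLiftable (permF cs) := by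
  intro i j
  apply Equiv.ext
  intro p
  rw [permF_mul_pow_apply, Equiv.Perm.one_apply, Prod.ext_iff]
  dsimp only
  constructor
  · rw [cs.simple_mul_simple_pow i j]
    simp
  · have h2 : 2 * M i j = M i j + M i j := by ring
    rw [h2, Finset.prod_range_add]
    have hper : ∀ l : ℕ, ((σ i * σ j)⁻¹) ^ (M i j + l) = ((σ i * σ j)⁻¹) ^ l := by
      intro l
      rw [pow_add]
      have : ((σ i * σ j)⁻¹) ^ (M i j) = 1 := by
        rw [inv_pow, cs.simple_mul_simple_pow i j, inv_one]
      rw [this, one_mul]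
    have : (∏ l ∈ Finset.range (M i j),
        (if p.1 = ((σ i * σ j)⁻¹) ^ (M i j + l) * σ j then (-1 : ℤˣ) else 1)) =
        (∏ l ∈ Finset.range (M i j),
        (if p.1 = ((σ i * σ j)⁻¹) ^ l * σ j then (-1 : ℤˣ) else 1)) := by
      apply Finset.prod_congr rfl
      intro l _
      rw [hper l]
    rw [this, ← sq]
    have hsq : ∀ u : ℤˣ, u ^ 2 = 1 := fun u => by
      rcases Int.units_eq_one_or u with h | h <;> simp [h]
    rw [hsq, one_mul]

/-- The sign-counting representation `W →* Perm (W × ℤˣ)`. -/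
noncomputable def rho : W →* Equiv.Perm (W × ℤˣ) :=
  cs.lift ⟨permF cs, permF_liftable cs⟩

lemma rho_simple (i : B) : rho cs (σ i) = permF cs i :=
  cs.lift_apply_simple (permF_liftable cs) i

/-- Sign of `t` against a list: `(-1)` to the number of occurrences of `t`. -/
noncomputable def sgnl (t : W) (l : List W) : ℤˣ :=
  (l.map fun x => if x = t then (-1 : ℤˣ) else 1).prod

@[simp] lemma sgnl_nil (t : W) : sgnl t ([] : List W) = 1 := rfl

lemma sgnl_cons (t x : W) (l : List W) :
    sgnl t (x :: l) = (if x = t then (-1 : ℤˣ) else 1) * sgnl t l := by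
  simp [sgnl]

lemma sgnl_append (t : W) (l₁ l₂ : List W) :
    sgnl t (l₁ ++ l₂) = sgnl t l₁ * sgnl t l₂ := by
  simp [sgnl]

lemma sgnl_reverse (t : W) (l : List W) :
    sgnl t l.reverse = sgnl t l := by
  unfold sgnl
  rw [List.map_reverse, List.prod_reverse]

lemma sgnl_map_conj (t c : W) (l : List W) :
    sgnl t (l.map fun x => c * x * c⁻¹) = sgnl (c⁻¹ * t * c) l := by
  simp only [sgnl, List.map_map]
  congr 1
  apply List.map_congr_left
  intro x _
  have : (c * x * c⁻¹ = t) ↔ (x = c⁻¹ * t * c) := by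
    constructor
    · intro h
      rw [← h]
      group
    · intro h
      rw [h]
      group
  simp [Function.comp, this]

lemma sgnl_eq_one_of_not_mem {t : W} {l : List W} (h : t ∉ l) : sgnl t l = 1 := by
  induction l with
  | nil => rfl
  | cons x l ih =>
      rw [sgnl_cons]
      have hx : x ≠ t := fun hxt => h (hxt ▸ List.mem_cons_self)
      rw [if_neg hx, one_mul]
      exact ih (fun hm => h (List.mem_cons_of_mem x hm))

lemma mem_of_sgnl_ne_one {t : W} {l : List W} (h : sgnl t l ≠ 1) : t ∈ l := by
  by_contra hm
  exact h (sgnl_eq_one_of_not_mem hm)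

lemma rightInvSeq_cons (i : B) (ω : List B) :
    cs.rightInvSeq (i :: ω) = ((π ω)⁻¹ * σ i * π ω) :: cs.rightInvSeq ω := rfl

lemma rightInvSeq_append (ω₁ ω₂ : List B) :
    cs.rightInvSeq (ω₁ ++ ω₂) =
      (cs.rightInvSeq ω₁).map (fun x => (π ω₂)⁻¹ * x * (π ω₂)) ++ cs.rightInvSeq ω₂ := by
  induction ω₁ with
  | nil => simp
  | cons i ω₁ ih =>
      rw [List.cons_append, rightInvSeq_cons, rightInvSeq_cons, ih, List.map_cons,
        List.cons_append]
      congr 1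
      rw [cs.wordProd_append]
      group

lemma leftInvSeq_eq_map_rightInvSeq (ω : List B) :
    cs.leftInvSeq ω = (cs.rightInvSeq ω).map (fun x => (π ω) * x * (π ω)⁻¹) := by
  induction ω with
  | nil => simp
  | cons i ω ih =>
      show (σ i) :: List.map (MulAut.conj (σ i)) (cs.leftInvSeq ω) = _
      rw [rightInvSeq_cons, List.map_cons, ih, List.map_map]
      congr 1
      · rw [cs.wordProd_cons]
        group
      · apply List.map_congr_left
        intro x _
        rw [cs.wordProd_cons]
        simp only [MulAut.conj_apply, Function.comp_apply]
        group

/-- The fundamental computation: `rho` on a word acts by conjugation together with the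
sign given by the right inversion sequence. -/
lemma rho_wordProd (ω : List B) (p : W × ℤˣ) :
    rho cs (π ω) p = (π ω * p.1 * (π ω)⁻¹, sgnl p.1 (cs.rightInvSeq ω) * p.2) := by
  induction ω generalizing p with
  | nil =>
      simp [sgnl]
  | cons i ω ih =>
      rw [cs.wordProd_cons, map_mul, Equiv.Perm.mul_apply, ih, rho_simple, permF_apply]
      rw [Prod.ext_iff]
      dsimp only
      rw [rightInvSeq_cons, sgnl_cons]
      constructor
      · rw [mul_inv_rev, cs.inv_simple]
        simp [mul_assoc]
      · have hiff : (π ω * p.1 * (π ω)⁻¹ = σ i) ↔ ((π ω)⁻¹ * σ i * π ω = p.1) := by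
          constructor
          · intro h
            rw [← h]
            group
          · intro h
            rw [← h]
            group
        rw [if_congr hiff rfl rfl]
        rw [← mul_assoc]

/-- The reflection cocycle (sign of `w` against a reflection `t`). -/
noncomputable def eta (w t : W) : ℤˣ := ((rho cs w) (t, 1)).2

lemma eta_eq_sgnl {w : W} (ω : List B) (hω : π ω = w) (t : W) :
    eta cs w t = sgnl t (cs.rightInvSeq ω) := by
  rw [eta, ← hω, rho_wordProd]
  simp

lemma rho_apply (w : W) (p : W × ℤˣ) :
    rho cs w p = (w * p.1 * w⁻¹, eta cs w p.1 * p.2) := by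
  obtain ⟨ω, hω⟩ := cs.wordProd_surjective w
  rw [← hω, rho_wordProd, eta_eq_sgnl cs ω rfl]

lemma eta_cocycle (u v t : W) :
    eta cs (u * v) t = eta cs v t * eta cs u (v * t * v⁻¹) := by
  have h1 : (rho cs (u * v)) (t, 1) = (rho cs u) ((rho cs v) (t, 1)) := by
    rw [map_mul]; rfl
  rw [rho_apply cs v, rho_apply cs u, rho_apply cs (u * v)] at h1
  dsimp only at h1
  have h2 := congrArg Prod.snd h1
  dsimp only at h2
  rw [mul_one, mul_one] at h2
  rw [h2, mul_comm]

@[simp] lemma eta_one (t : W) : eta cs 1 t = 1 := by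
  rw [eta, map_one]
  rfl

lemma units_mul_self (u : ℤˣ) : u * u = 1 := by
  rcases Int.units_eq_one_or u with h | h <;> simp [h]

lemma units_aba (a b : ℤˣ) : a * b * a = b := by
  rcases Int.units_eq_one_or a with h | h <;> simp [h]

lemma units_eq_of_mul_eq_one {u v : ℤˣ} (h : u * v = 1) : v = u := by
  rcases Int.units_eq_one_or u with h1 | h1 <;> rcases Int.units_eq_one_or v with h2 | h2 <;>
    simp [h1, h2] at h ⊢

/-- The palindromic-word sign computation. -/
lemma palSgn {t v r : W} {c : B} (htv : t = v * σ c * v⁻¹) (a : List B) (ha : π a = v) :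
    eta cs t r =
      sgnl (σ c * (v⁻¹ * r * v) * σ c) (cs.rightInvSeq a) *
        (if t = r then (-1 : ℤˣ) else 1) * sgnl (v⁻¹ * r * v) (cs.rightInvSeq a) := by
  set z := v⁻¹ * r * v with hzdef
  have hδ : π (a ++ (c :: a.reverse)) = t := by
    rw [cs.wordProd_append, cs.wordProd_cons, cs.wordProd_reverse, ha, htv]
    group
  rw [eta_eq_sgnl cs _ hδ]
  rw [rightInvSeq_append, sgnl_append, rightInvSeq_cons, sgnl_cons]
  have h1 : π (c :: a.reverse) = σ c * v⁻¹ := by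
    rw [cs.wordProd_cons, cs.wordProd_reverse, ha]
  have hmid : (π a.reverse)⁻¹ * σ c * π a.reverse = t := by
    rw [cs.wordProd_reverse, ha, inv_inv, htv]
  rw [hmid]
  have h2 : sgnl r ((cs.rightInvSeq a).map fun x => (π (c :: a.reverse))⁻¹ * x * π (c :: a.reverse))
      = sgnl (σ c * z * σ c) (cs.rightInvSeq a) := by
    have : (fun (x : W) => (π (c :: a.reverse))⁻¹ * x * π (c :: a.reverse)) =
        (fun (x : W) => (π (c :: a.reverse))⁻¹ * x * ((π (c :: a.reverse))⁻¹)⁻¹) := by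
      funext x; rw [inv_inv]
    rw [this, sgnl_map_conj]
    congr 1
    rw [h1, inv_inv, mul_inv_rev, inv_inv, cs.inv_simple]
    simp only [hzdef, mul_assoc]
  have h3 : sgnl r (cs.rightInvSeq a.reverse) = sgnl z (cs.rightInvSeq a) := by
    rw [cs.rightInvSeq_reverse, sgnl_reverse, leftInvSeq_eq_map_rightInvSeq]
    have : (fun (x : W) => (π a) * x * (π a)⁻¹) = (fun (x : W) => v * x * v⁻¹) := by
      funext x; rw [ha]
    rw [this, sgnl_map_conj, hzdef]
  rw [h2, h3]
  rw [← mul_assoc]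

lemma eta_refl_self {t : W} (ht : cs.IsReflection t) : eta cs t t = -1 := by
  obtain ⟨w, i, rfl⟩ := ht
  obtain ⟨a, ha⟩ := cs.wordProd_surjective w
  rw [palSgn cs rfl a ha]
  have hz : w⁻¹ * (w * σ i * w⁻¹) * w = σ i := by group
  rw [hz]
  have : σ i * σ i * σ i = σ i := by rw [cs.simple_mul_simple_self, one_mul]
  rw [this, if_pos rfl]
  exact units_aba _ _

/-- Fixed point lemma: if `t r t = r` and `η(t,r) = -1` then `r = t`. -/
lemma eq_of_conj_fixed {t r : W} (ht : cs.IsReflection t) (hfix : t * r * t = r)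
    (h : eta cs t r = -1) : r = t := by
  obtain ⟨w, i, htw⟩ := ht
  obtain ⟨a, ha⟩ := cs.wordProd_surjective w
  rw [palSgn cs htw a ha] at h
  have hz : σ i * (w⁻¹ * r * w) * σ i = w⁻¹ * r * w := by
    have : σ i * (w⁻¹ * r * w) * σ i = w⁻¹ * ((w * σ i * w⁻¹) * r * (w * σ i * w⁻¹)) * w := by
      group
    rw [this, ← htw, hfix]
  rw [hz] at h
  rw [units_aba] at h
  by_cases hcase : t = r
  · exact hcase.symm
  · rw [if_neg hcase] at h
    exact absurd h (by decide)

lemma length_mul_lt_of_eta_neg {w t : W} (h : eta cs w t = -1) : ℓ (w * t) < ℓ w := by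
  obtain ⟨ω, hred, hω⟩ := cs.exists_reduced_word' w
  rw [eta_eq_sgnl cs ω hω.symm] at h
  have hmem : t ∈ cs.rightInvSeq ω := by
    apply mem_of_sgnl_ne_one
    rw [h]; decide
  have := cs.isRightInversion_of_mem_rightInvSeq hred hmem
  rw [hω]
  exact this.2

lemma eta_neg_of_length_mul_lt {w t : W} (ht : cs.IsReflection t) (h : ℓ (w * t) < ℓ w) :
    eta cs w t = -1 := by
  have hw : w = (w * t) * t := by
    rw [mul_assoc, ht.mul_self, mul_one]
  have hco : eta cs w t = eta cs t t * eta cs (w * t) (t * t * t⁻¹) := by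
    nth_rw 1 [hw]
    exact eta_cocycle cs (w * t) t t
  have htt : t * t * t⁻¹ = t := by rw [ht.mul_self, one_mul, ht.inv]
  rw [htt, eta_refl_self cs ht] at hco
  rcases Int.units_eq_one_or (eta cs (w * t) t) with h1 | h1
  · rw [h1] at hco; simpa using hco
  · exfalso
    have := length_mul_lt_of_eta_neg cs h1
    rw [mul_assoc, ht.mul_self, mul_one] at this
    omega

lemma eta_neg_iff {t : W} (ht : cs.IsReflection t) (w : W) :
    eta cs w t = -1 ↔ ℓ (w * t) < ℓ w :=
  ⟨length_mul_lt_of_eta_neg cs, eta_neg_of_length_mul_lt cs ht⟩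

lemma eta_one_iff {t : W} (ht : cs.IsReflection t) (w : W) :
    eta cs w t = 1 ↔ ℓ w < ℓ (w * t) := by
  have hne := ht.length_mul_left_ne w
  constructor
  · intro h
    rcases lt_or_gt_of_ne hne with h1 | h1
    · rw [eta_neg_of_length_mul_lt cs ht h1] at h
      exact absurd h (by decide)
    · exact h1
  · intro h
    rcases Int.units_eq_one_or (eta cs w t) with h1 | h1
    · exact h1
    · have := length_mul_lt_of_eta_neg cs h1
      omega

lemma eta_conj_self {t r : W} (ht : cs.IsReflection t) :
    eta cs t (t * r * t) = eta cs t r := by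
  have h1 : eta cs (t * t) r = eta cs t r * eta cs t (t * r * t⁻¹) := eta_cocycle cs t t r
  rw [ht.mul_self, eta_one, ht.inv] at h1
  exact units_eq_of_mul_eq_one h1.symm

lemma eta_conj_formula (w v x : W) :
    eta cs w (v * x * v⁻¹) = eta cs (w * v) x * eta cs v x := by
  have h1 : eta cs (w * v) x = eta cs v x * eta cs w (v * x * v⁻¹) := eta_cocycle cs w v x
  rw [h1]
  exact (units_aba (eta cs v x) (eta cs w (v * x * v⁻¹))).symm

lemma length_conj_le (v x : W) : ℓ (v * x * v⁻¹) ≤ ℓ v + ℓ x + ℓ v := by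
  calc ℓ (v * x * v⁻¹) ≤ ℓ (v * x) + ℓ v⁻¹ := cs.length_mul_le (v * x) v⁻¹
    _ ≤ ℓ v + ℓ x + ℓ v⁻¹ := by
        have := cs.length_mul_le v x
        omega
    _ = ℓ v + ℓ x + ℓ v := by rw [cs.length_inv]

lemma length_le_of_mem_leftInvSeq (a : List B) {y : W} (hy : y ∈ cs.leftInvSeq a) :
    ℓ y + 1 ≤ 2 * a.length := by
  obtain ⟨j, hj, hyj⟩ := List.mem_iff_getElem.mp hy
  rw [cs.length_leftInvSeq] at hj
  have hgd : (cs.leftInvSeq a).getD j 1 = y := by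
    rw [List.getD_eq_getElem _ 1 (by rw [cs.length_leftInvSeq]; exact hj)]
    exact hyj
  rw [cs.getD_leftInvSeq] at hgd
  have hget : a[j]? = some (a.get ⟨j, hj⟩) := List.getElem?_eq_getElem hj
  rw [hget] at hgd
  have hX : (Option.map (cs.simple) (some (a.get ⟨j, hj⟩))).getD 1 = σ (a.get ⟨j, hj⟩) := rfl
  rw [hX] at hgd
  have hlen : ℓ y ≤ (a.take j).length + 1 + (a.take j).length := by
    rw [← hgd]
    calc ℓ (π (a.take j) * σ (a.get ⟨j, hj⟩) * (π (a.take j))⁻¹)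
        ≤ ℓ (π (a.take j)) + ℓ (σ (a.get ⟨j, hj⟩)) + ℓ (π (a.take j)) :=
          length_conj_le cs _ _
      _ ≤ (a.take j).length + ℓ (σ (a.get ⟨j, hj⟩)) + (a.take j).length := by
          have := cs.length_wordProd_le (a.take j)
          omega
      _ = (a.take j).length + 1 + (a.take j).length := by rw [cs.length_simple]
  have : (a.take j).length ≤ j := by simp
  omega

/-- Every reflection has a palindromic reduced decomposition. -/
lemma refl_palindrome : ∀ (n : ℕ) (t : W), cs.IsReflection t → ℓ t ≤ n →
    ∃ (v : W) (c : B), t = v * σ c * v⁻¹ ∧ ℓ t = 2 * ℓ v + 1 := by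
  intro n
  induction n with
  | zero =>
      intro t ht hle
      exfalso
      have := ht.odd_length
      have h0 : ℓ t = 0 := Nat.le_zero.mp hle
      rw [h0] at this
      exact (Nat.not_odd_iff_even.mpr Even.zero) this
  | succ n ih =>
      intro t ht hle
      have hodd := ht.odd_length
      have hne1 : t ≠ 1 := by
        intro h
        rw [h, cs.length_one] at hodd
        exact (Nat.not_odd_iff_even.mpr Even.zero) hodd
      by_cases hl1 : ℓ t = 1
      · obtain ⟨c, hc⟩ := cs.length_eq_one_iff.mp hl1
        refine ⟨1, c, ?_, ?_⟩
        · rw [hc]; group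
        · rw [hl1, cs.length_one]
      · -- ℓ t ≥ 3
        have hge : 3 ≤ ℓ t := by
          rcases hodd with ⟨k, hk⟩
          omega
        obtain ⟨i, hi⟩ := cs.exists_rightDescent_of_ne_one hne1
        have hdesc : ℓ (t * σ i) < ℓ t := hi
        have hsimp_ne : σ i ≠ t := by
          intro h
          rw [← h, cs.length_simple] at hge
          omega
        have hts : ℓ (t * σ i) = ℓ t - 1 := by
          rcases cs.length_mul_simple t i with h | h <;> omega
        have hst : ℓ (σ i * t) = ℓ (t * σ i) := by
          have : (σ i * t)⁻¹ = t * σ i := by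
            rw [mul_inv_rev, cs.inv_simple, ht.inv]
          rw [← cs.length_inv (σ i * t), this]
        -- key: σ i * t * σ i is shorter
        have hkey : ℓ (σ i * t * σ i) < ℓ (σ i * t) := by
          have hetai : eta cs t (σ i) = -1 :=
            eta_neg_of_length_mul_lt cs (cs.isReflection_simple i) hdesc
          have hco : eta cs (σ i * t) (σ i) =
              eta cs t (σ i) * eta cs (σ i) (t * σ i * t⁻¹) := eta_cocycle cs (σ i) t (σ i)
          have hp : eta cs (σ i) (t * σ i * t⁻¹) = 1 := by
            rcases Int.units_eq_one_or (eta cs (σ i) (t * σ i * t⁻¹)) with h | h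
            · exact h
            · exfalso
              have hlen := length_mul_lt_of_eta_neg cs h
              rw [cs.length_simple] at hlen
              have h0 : ℓ (σ i * (t * σ i * t⁻¹)) = 0 := by omega
              have h1 : σ i * (t * σ i * t⁻¹) = 1 := cs.length_eq_zero_iff.mp h0
              have h2 : t * σ i * t⁻¹ = σ i := by
                have := congrArg (fun x => σ i * x) h1
                simpa [← mul_assoc] using this
              rw [ht.inv] at h2
              have := eq_of_conj_fixed cs ht h2 hetai
              exact hsimp_ne this
          have : eta cs (σ i * t) (σ i) = -1 := by
            rw [hco, hp, hetai]; rfl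
          exact length_mul_lt_of_eta_neg cs this
        set t' := σ i * t * σ i with ht'def
        have ht' : cs.IsReflection t' := by
          have := ht.conj (σ i)
          rwa [cs.inv_simple] at this
        have hlt' : ℓ t' + 2 ≤ ℓ t := by
          rw [hst, hts] at hkey
          omega
        obtain ⟨v', c, hv'c, hv'len⟩ := ih t' ht' (by omega)
        have htt' : t = σ i * t' * σ i := by
          rw [ht'def]
          simp [← mul_assoc]
        have htge : ℓ t ≤ ℓ t' + 2 := by
          rw [htt']
          calc ℓ (σ i * t' * σ i) ≤ ℓ (σ i * t') + 1 := by
                have := cs.length_mul_le (σ i * t') (σ i)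
                rw [cs.length_simple] at this
                omega
            _ ≤ ℓ t' + 1 + 1 := by
                have := cs.length_mul_le (σ i) t'
                rw [cs.length_simple] at this
                omega
            _ = ℓ t' + 2 := by omega
        have hteq : ℓ t = ℓ t' + 2 := by omega
        refine ⟨σ i * v', c, ?_, ?_⟩
        · rw [htt', hv'c]
          rw [mul_inv_rev, cs.inv_simple]
          simp [mul_assoc]
        · have hv : ℓ (σ i * v') = ℓ v' + 1 ∨ ℓ (σ i * v') + 1 = ℓ v' :=
            cs.length_simple_mul v' i
          rcases hv with h | h
          · omega
          · exfalso
            have hbound : ℓ t ≤ 2 * ℓ (σ i * v') + 1 := by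
              have heq : t = (σ i * v') * σ c * (σ i * v')⁻¹ := by
                rw [htt', hv'c, mul_inv_rev, cs.inv_simple]
                simp [mul_assoc]
              rw [heq]
              have := length_conj_le cs (σ i * v') (σ c)
              rw [cs.length_simple] at this
              omega
            omega

/-- Dyer's dichotomy: an inversion `r` of a reflection `t` is either short, or its
conjugate `t r t` is short. -/
lemma lengthP {t r : W} (ht : cs.IsReflection t) (hneg : eta cs t r = -1) (hne : r ≠ t) :
    ℓ r + 2 ≤ ℓ t ∨ ℓ (t * r * t) + 2 ≤ ℓ t := by
  obtain ⟨v, c, htv, hlen⟩ := refl_palindrome cs (ℓ t) t ht le_rfl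
  obtain ⟨a, halen, hav⟩ := cs.exists_reduced_word v
  have ha : π a = v := hav.symm
  have hδ : π (a ++ (c :: a.reverse)) = t := by
    rw [cs.wordProd_append, cs.wordProd_cons, cs.wordProd_reverse, ha, htv]
    group
  have hsgn : sgnl r (cs.rightInvSeq (a ++ (c :: a.reverse))) = -1 := by
    rw [← eta_eq_sgnl cs _ hδ]
    exact hneg
  have hmem : r ∈ cs.rightInvSeq (a ++ (c :: a.reverse)) := by
    apply mem_of_sgnl_ne_one
    rw [hsgn]; decide
  rw [rightInvSeq_append, rightInvSeq_cons] at hmem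
  have hmid : (π a.reverse)⁻¹ * σ c * π a.reverse = t := by
    rw [cs.wordProd_reverse, ha, inv_inv, htv]
  rcases List.mem_append.mp hmem with hm | hm
  · -- r is in the first block: t * r * t is short
    right
    obtain ⟨x, hx, hxr⟩ := List.mem_map.mp hm
    have hrst : π (c :: a.reverse) = σ c * v⁻¹ := by
      rw [cs.wordProd_cons, cs.wordProd_reverse, ha]
    have htrt : t * r * t = v * x * v⁻¹ := by
      rw [← hxr, hrst, htv]
      group
      rw [cs.simple_mul_simple_cancel_right]
    have hmemlis : v * x * v⁻¹ ∈ cs.leftInvSeq a := by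
      rw [leftInvSeq_eq_map_rightInvSeq]
      apply List.mem_map.mpr
      exact ⟨x, hx, by rw [ha]⟩
    have := length_le_of_mem_leftInvSeq cs a hmemlis
    rw [← halen.eq, ha] at this
    rw [htrt]
    omega
  · rcases List.mem_cons.mp hm with hm1 | hm2
    · exact absurd (hm1.trans hmid) hne
    · left
      rw [cs.rightInvSeq_reverse] at hm2
      have hmemlis : r ∈ cs.leftInvSeq a := List.mem_reverse.mp hm2
      have := length_le_of_mem_leftInvSeq cs a hmemlis
      rw [← halen.eq, ha] at this
      omega

section ReflSubgroup

variable (N : Subgroup W)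

/-- The set of reflections lying in `N`. -/
def RN : Set W := {t : W | cs.IsReflection t ∧ t ∈ N}

/-- The "canonical generators": reflections of `N` whose only `N`-inversion is itself. -/
def SigN : Set W := {t : W | t ∈ RN cs N ∧ ∀ r ∈ RN cs N, eta cs t r = -1 → r = t}

lemma SigN_subset_RN : SigN cs N ⊆ RN cs N := fun _ h => h.1

lemma RN_subset_N : RN cs N ⊆ (N : Set W) := fun _ h => h.2

lemma conj_mem_RN {r n : W} (hr : r ∈ RN cs N) (hn : n ∈ N) : n * r * n⁻¹ ∈ RN cs N := by
  refine ⟨hr.1.conj n, ?_⟩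
  exact N.mul_mem (N.mul_mem hn hr.2) (N.inv_mem hn)

/-- Dyer's theorem on canonical generators: every reflection in `N` is a product of
canonical generators. -/
lemma RN_mem_closure_SigN : ∀ (n : ℕ) (t : W), t ∈ RN cs N → ℓ t ≤ n →
    t ∈ Subgroup.closure (SigN cs N) := by
  intro n
  induction n with
  | zero =>
      intro t ht hle
      exfalso
      have hodd := ht.1.odd_length
      have h0 : ℓ t = 0 := Nat.le_zero.mp hle
      rw [h0] at hodd
      exact (Nat.not_odd_iff_even.mpr Even.zero) hodd
  | succ n ih =>
      intro t htRN hle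
      by_cases hS : t ∈ SigN cs N
      · exact Subgroup.subset_closure hS
      · have ht := htRN.1
        have htN := htRN.2
        -- there is a nontrivial N-inversion of t
        have hD : ∃ r, r ∈ RN cs N ∧ eta cs t r = -1 ∧ r ≠ t := by
          by_contra hcon
          push_neg at hcon
          exact hS ⟨htRN, fun r hr hneg => hcon r hr hneg⟩
        set Dset : Set W := {r : W | r ∈ RN cs N ∧ eta cs t r = -1 ∧ r ≠ t} with hDdef
        have hDne : Dset.Nonempty := by
          obtain ⟨r, h1, h2, h3⟩ := hD
          exact ⟨r, h1, h2, h3⟩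
        have hSne : (cs.length '' Dset).Nonempty := hDne.image _
        obtain ⟨r, hrD, hrlen⟩ := Nat.sInf_mem hSne
        have hmin : ∀ r' ∈ Dset, ℓ r ≤ ℓ r' := by
          intro r' h'
          rw [hrlen]
          exact Nat.sInf_le ⟨r', h', rfl⟩
        obtain ⟨hrRN, hrneg, hrne⟩ := hrD
        have hr := hrRN.1
        -- the conjugate t r t
        have hφrefl : cs.IsReflection (t * r * t) := by
          have := hr.conj t
          rwa [ht.inv] at this
        have hφN : t * r * t ∈ N := N.mul_mem (N.mul_mem htN hrRN.2) htN
        have hφneg : eta cs t (t * r * t) = -1 := by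
          rw [eta_conj_self cs ht]
          exact hrneg
        have hφne_t : t * r * t ≠ t := by
          intro h
          apply hrne
          have h2 : r = (t * t) * r * (t * t) := by rw [ht.mul_self]; simp
          calc r = (t * t) * r * (t * t) := h2
            _ = t * (t * r * t) * t := by group
            _ = t * t * t := by rw [h]
            _ = t := by rw [ht.mul_self, one_mul]
        have hφne_r : t * r * t ≠ r := by
          intro h
          exact hrne (eq_of_conj_fixed cs ht h hrneg)
        have hφD : t * r * t ∈ Dset := ⟨⟨hφrefl, hφN⟩, hφneg, hφne_t⟩
        -- step (i): r is short
        have hrle : ℓ r + 2 ≤ ℓ t := by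
          rcases lengthP cs ht hrneg hrne with h | h
          · exact h
          · have := hmin _ hφD
            omega
        -- step (ii): r * t * r is short
        have hgood : eta cs r (t * r * t) = 1 := by
          rcases Int.units_eq_one_or (eta cs r (t * r * t)) with h | h
          · exact h
          · exfalso
            -- Bad case
            have hbadlen : ℓ (r * (t * r * t)) < ℓ r := length_mul_lt_of_eta_neg cs h
            by_cases hc : ℓ (t * r * t) < ℓ r
            · have := hmin _ hφD
              omega
            · push_neg at hc
              rcases lengthP cs hr h hφne_r with h1 | h1
              · omega
              · -- z := r * (t*r*t) * r is a shorter element of Dset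
                set z := r * (t * r * t) * r with hzdef
                have hzrefl : cs.IsReflection z := by
                  have := hφrefl.conj r
                  rwa [hr.inv] at this
                have hzN : z ∈ N := N.mul_mem (N.mul_mem hrRN.2 hφN) hrRN.2
                have hφr_neg : eta cs (t * r * t) r = -1 := by
                  apply eta_neg_of_length_mul_lt cs hr
                  have hinv : (t * r * t * r)⁻¹ = r * (t * r * t) := by
                    rw [mul_inv_rev, mul_inv_rev, mul_inv_rev, ht.inv, hr.inv]
                    group
                  have : ℓ (t * r * t * r) = ℓ (r * (t * r * t)) := by
                    rw [← cs.length_inv (t * r * t * r), hinv]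
                  omega
                have hzneg : eta cs t z = -1 := by
                  have e1 : eta cs t (r * (t * r * t) * r⁻¹) =
                      eta cs (t * r) (t * r * t) * eta cs r (t * r * t) :=
                    eta_conj_formula cs t r (t * r * t)
                  have e2 : eta cs (t * r) (t * r * t⁻¹) =
                      eta cs (t * r * t) r * eta cs t r :=
                    eta_conj_formula cs (t * r) t r
                  rw [ht.inv] at e2
                  rw [hr.inv] at e1
                  rw [hzdef, e1, e2, hφr_neg, hrneg, h]
                  decide
                have hzne_t : z ≠ t := by
                  intro hzt
                  rw [hzt] at h1
                  omega
                have hzD : z ∈ Dset := ⟨⟨hzrefl, hzN⟩, hzneg, hzne_t⟩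
                have := hmin _ hzD
                omega
        -- conclude: ℓ (r * t * r) + 2 ≤ ℓ t
        have hrtr_neg : eta cs (r * t) r = -1 := by
          have e : eta cs (r * t) r = eta cs t r * eta cs r (t * r * t⁻¹) :=
            eta_cocycle cs r t r
          rw [ht.inv] at e
          rw [e, hrneg, hgood]
          decide
        have hrt_len : ℓ (r * t) < ℓ t := by
          have h1 : ℓ (t * r) < ℓ t := length_mul_lt_of_eta_neg cs hrneg
          have hinv : (r * t)⁻¹ = t * r := by rw [mul_inv_rev, ht.inv, hr.inv]
          rw [← cs.length_inv (r * t), hinv]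
          exact h1
        have hrtr_len : ℓ (r * t * r) < ℓ (r * t) := length_mul_lt_of_eta_neg cs hrtr_neg
        -- assemble membership
        have hrcl : r ∈ Subgroup.closure (SigN cs N) := ih r hrRN (by omega)
        have hrtrRN : r * t * r ∈ RN cs N := by
          refine ⟨?_, N.mul_mem (N.mul_mem hrRN.2 htN) hrRN.2⟩
          have := ht.conj r
          rwa [hr.inv] at this
        have hrtrcl : r * t * r ∈ Subgroup.closure (SigN cs N) :=
          ih (r * t * r) hrtrRN (by omega)
        have htdecomp : t = r * (r * t * r) * r := by
          have h3 : r * (r * t * r) * r = (r * r) * t * (r * r) := by group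
          rw [h3, hr.mul_self, one_mul, mul_one]
        rw [htdecomp]
        exact Subgroup.mul_mem _ (Subgroup.mul_mem _ hrcl hrtrcl) hrcl

/-- Strong exchange for words in the canonical generators. -/
lemma sig_exchange : ∀ (l : List W), (∀ x ∈ l, x ∈ SigN cs N) → ∀ p ∈ RN cs N,
    eta cs l.prod p = -1 → ∃ j < l.length, l.prod * p = (l.eraseIdx j).prod := by
  intro l
  induction l with
  | nil =>
      intro _ p _ hneg
      rw [List.prod_nil, eta_one] at hneg
      exact absurd hneg (by decide)
  | cons x l ih =>
      intro hmem p hp hneg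
      have hx : x ∈ SigN cs N := hmem x (List.mem_cons_self)
      have hl : ∀ y ∈ l, y ∈ SigN cs N := fun y hy => hmem y (List.mem_cons_of_mem x hy)
      have hcN : l.prod ∈ N := by
        apply Subgroup.list_prod_mem
        intro y hy
        exact (SigN_subset_RN cs N (hl y hy)).2
      have hq : l.prod * p * l.prod⁻¹ ∈ RN cs N := conj_mem_RN cs N hp hcN
      rw [List.prod_cons] at hneg
      have e : eta cs (x * l.prod) p =
          eta cs l.prod p * eta cs x (l.prod * p * l.prod⁻¹) := eta_cocycle cs x l.prod p
      rw [e] at hneg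
      rcases Int.units_eq_one_or (eta cs x (l.prod * p * l.prod⁻¹)) with h1 | h1
      · have h2 : eta cs l.prod p = -1 := by
          rw [h1, mul_one] at hneg
          exact hneg
        obtain ⟨j, hj, hje⟩ := ih hl p hp h2
        refine ⟨j + 1, by simpa using Nat.succ_lt_succ hj, ?_⟩
        rw [List.prod_cons, List.eraseIdx_cons_succ, List.prod_cons, mul_assoc, hje]
      · have h2 : l.prod * p * l.prod⁻¹ = x :=
          hx.2 _ hq h1
        refine ⟨0, Nat.succ_pos _, ?_⟩
        rw [List.prod_cons, List.eraseIdx_cons_zero]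
        rw [← h2]
        have hpp : p * p = 1 := hp.1.mul_self
        group
        rw [mul_assoc, hpp, mul_one]

/-- The key descent property (Dyer/Deodhar): a nontrivial element of a reflection
subgroup has a descent by a reflection of the subgroup. -/
lemma exists_RN_descent (hN : N = Subgroup.closure (RN cs N)) {n : W} (hn : n ∈ N)
    (h1 : n ≠ 1) : ∃ t ∈ RN cs N, eta cs n t = -1 := by
  classical
  have hle : Subgroup.closure (RN cs N) ≤ Subgroup.closure (SigN cs N) := by
    apply (Subgroup.closure_le _).mpr
    intro t ht
    exact RN_mem_closure_SigN cs N (ℓ t) t ht le_rfl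
  have hncl : n ∈ Subgroup.closure (SigN cs N) := hle (hN ▸ hn)
  -- get a word in SigN
  have hword : ∃ l : List W, (∀ x ∈ l, x ∈ SigN cs N) ∧ l.prod = n := by
    have h2 : n ∈ (Subgroup.closure (SigN cs N)).toSubmonoid := hncl
    rw [Subgroup.closure_toSubmonoid] at h2
    obtain ⟨l, hl, hprod⟩ := Submonoid.exists_list_of_mem_closure h2
    refine ⟨l, ?_, hprod⟩
    intro y hy
    rcases hl y hy with h | h
    · exact h
    · have hyS : y⁻¹ ∈ SigN cs N := Set.mem_inv.mp h
      have hyr : cs.IsReflection y⁻¹ := hyS.1.1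
      have : (y⁻¹)⁻¹ = y⁻¹ := hyr.inv
      rw [inv_inv] at this
      rwa [this]
  set K : Set ℕ := {k | ∃ l : List W, (∀ x ∈ l, x ∈ SigN cs N) ∧ l.prod = n ∧ l.length = k}
    with hKdef
  have hKne : K.Nonempty := by
    obtain ⟨l, h2, h3⟩ := hword
    exact ⟨l.length, l, h2, h3, rfl⟩
  obtain ⟨l, hlS, hlprod, hllen⟩ := Nat.sInf_mem hKne
  have hlne : l ≠ [] := by
    intro h
    rw [h, List.prod_nil] at hlprod
    exact h1 hlprod.symm
  set x := l.getLast hlne with hxdef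
  have hxS : x ∈ SigN cs N := hlS x (List.getLast_mem hlne)
  have hxr : cs.IsReflection x := hxS.1.1
  have hsplit : l.dropLast ++ [x] = l := List.dropLast_append_getLast hlne
  have hprodsplit : l.dropLast.prod * x = n := by
    rw [← hlprod, ← hsplit, List.prod_append, List.prod_singleton]
    rw [hsplit]
  have e : eta cs (l.dropLast.prod * x) x =
      eta cs x x * eta cs l.dropLast.prod (x * x * x⁻¹) := eta_cocycle cs l.dropLast.prod x x
  rw [hxr.mul_self, one_mul, hxr.inv] at e
  rw [eta_refl_self cs hxr] at e
  rcases Int.units_eq_one_or (eta cs l.dropLast.prod x) with h2 | h2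
  · refine ⟨x, SigN_subset_RN cs N hxS, ?_⟩
    rw [← hprodsplit, e, h2]
    decide
  · exfalso
    have hdl : ∀ y ∈ l.dropLast, y ∈ SigN cs N := by
      intro y hy
      exact hlS y (List.dropLast_subset l hy)
    obtain ⟨j, hj, hje⟩ := sig_exchange cs N l.dropLast hdl x (SigN_subset_RN cs N hxS) h2
    have hnew : (l.dropLast.eraseIdx j).prod = n := by
      rw [← hje, hprodsplit]
    have hnewS : ∀ y ∈ l.dropLast.eraseIdx j, y ∈ SigN cs N := by
      intro y hy
      exact hdl y (List.eraseIdx_subset hy)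
    have hlen1 : (l.dropLast.eraseIdx j).length + 1 = l.dropLast.length :=
      List.length_eraseIdx_add_one hj
    have hlen2 : l.dropLast.length + 1 = l.length := by
      conv_rhs => rw [← hsplit]
      rw [List.length_append, List.length_singleton]
    have hKmem : (l.dropLast.eraseIdx j).length ∈ K :=
      ⟨l.dropLast.eraseIdx j, hnewS, hnew, rfl⟩
    have := Nat.sInf_le hKmem
    omega

end ReflSubgroup


end Stmt12Aux

/-- The Bruhat order on a Coxeter group: the reflexive-transitive closure of the relation
`u < u * t` for `t` a reflection with `ℓ(u) < ℓ(u * t)`. -/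
def bruhatLE {B W : Type*} [Group W] {M : CoxeterMatrix B} (cs : CoxeterSystem M W) :
    W → W → Prop :=
  Relation.ReflTransGen
    (fun u v => ∃ t : W, cs.IsReflection t ∧ v = u * t ∧ cs.length u < cs.length v)

namespace Stmt12Aux

open CoxeterSystem List

variable {B W : Type*} [Group W] {M : CoxeterMatrix B} (cs : CoxeterSystem M W)

lemma bruhat_step {u t : W} (ht : cs.IsReflection t)
    (h : cs.length u < cs.length (u * t)) : bruhatLE cs u (u * t) :=
  Relation.ReflTransGen.single ⟨t, ht, rfl, h⟩

lemma bruhat_step_down {u t : W} (ht : cs.IsReflection t)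
    (h : cs.length (u * t) < cs.length u) : bruhatLE cs (u * t) u :=
  Relation.ReflTransGen.single
    ⟨t, ht, by rw [mul_assoc, ht.mul_self, mul_one], h⟩

lemma bruhat_length_le {a b : W} (h : bruhatLE cs a b) :
    cs.length a ≤ cs.length b ∧ (cs.length a = cs.length b → a = b) := by
  induction h with
  | refl => exact ⟨le_rfl, fun _ => rfl⟩
  | tail hxy hstep ih =>
      obtain ⟨t, _, rfl, hlt⟩ := hstep
      constructor
      · omega
      · intro heq
        omega

lemma bruhat_antisymm {a b : W} (h1 : bruhatLE cs a b) (h2 : bruhatLE cs b a) : a = b := by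
  have g1 := bruhat_length_le cs h1
  have g2 := bruhat_length_le cs h2
  exact g1.2 (le_antisymm g1.1 g2.1)

section Coset

variable (N : Subgroup W) (w : W)

lemma exists_min_chain : ∀ (n : ℕ) (u : W), cs.length u ≤ n → (∃ m ∈ N, u = w * m) →
    ∃ u₀, (∃ m ∈ N, u₀ = w * m) ∧ (∀ t ∈ RN cs N, eta cs u₀ t = 1) ∧ bruhatLE cs u₀ u := by
  intro n
  induction n with
  | zero =>
      intro u hu hC
      refine ⟨u, hC, ?_, Relation.ReflTransGen.refl⟩
      intro t htRN
      rcases Int.units_eq_one_or (eta cs u t) with h | h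
      · exact h
      · exfalso
        have := length_mul_lt_of_eta_neg cs h
        omega
  | succ n ih =>
      intro u hu hC
      by_cases hdes : ∃ t ∈ RN cs N, eta cs u t = -1
      · obtain ⟨t, htRN, hneg⟩ := hdes
        have hlt : cs.length (u * t) < cs.length u := length_mul_lt_of_eta_neg cs hneg
        obtain ⟨m, hmN, hm⟩ := hC
        have hC' : ∃ m' ∈ N, u * t = w * m' :=
          ⟨m * t, N.mul_mem hmN htRN.2, by rw [hm, mul_assoc]⟩
        obtain ⟨u₀, h1, h2, h3⟩ := ih (u * t) (by omega) hC'
        exact ⟨u₀, h1, h2, h3.trans (bruhat_step_down cs htRN.1 hlt)⟩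
      · push_neg at hdes
        refine ⟨u, hC, ?_, Relation.ReflTransGen.refl⟩
        intro t htRN
        rcases Int.units_eq_one_or (eta cs u t) with h | h
        · exact h
        · exact absurd h (hdes t htRN)

lemma exists_max_chain (K : ℕ) (hK : ∀ v : W, cs.length v ≤ K) :
    ∀ (fuel : ℕ) (u : W), K ≤ cs.length u + fuel → (∃ m ∈ N, u = w * m) →
    ∃ u₁, (∃ m ∈ N, u₁ = w * m) ∧ (∀ t ∈ RN cs N, eta cs u₁ t = -1) ∧ bruhatLE cs u u₁ := by
  intro fuel
  induction fuel with
  | zero =>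
      intro u hu hC
      refine ⟨u, hC, ?_, Relation.ReflTransGen.refl⟩
      intro t htRN
      rcases Int.units_eq_one_or (eta cs u t) with h | h
      · exfalso
        have := (eta_one_iff cs htRN.1 u).mp h
        have := hK (u * t)
        omega
      · exact h
  | succ fuel ih =>
      intro u hu hC
      by_cases hasc : ∃ t ∈ RN cs N, eta cs u t = 1
      · obtain ⟨t, htRN, hone⟩ := hasc
        have hlt : cs.length u < cs.length (u * t) := (eta_one_iff cs htRN.1 u).mp hone
        obtain ⟨m, hmN, hm⟩ := hC
        have hC' : ∃ m' ∈ N, u * t = w * m' :=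
          ⟨m * t, N.mul_mem hmN htRN.2, by rw [hm, mul_assoc]⟩
        obtain ⟨u₁, h1, h2, h3⟩ := ih (u * t) (by omega) hC'
        exact ⟨u₁, h1, h2, (bruhat_step cs htRN.1 hlt).trans h3⟩
      · push_neg at hasc
        refine ⟨u, hC, ?_, Relation.ReflTransGen.refl⟩
        intro t htRN
        rcases Int.units_eq_one_or (eta cs u t) with h | h
        · exact absurd h (hasc t htRN)
        · exact h

lemma coset_diff_mem {u u' : W} (hu : ∃ m ∈ N, u = w * m) (hu' : ∃ m ∈ N, u' = w * m) :
    u⁻¹ * u' ∈ N ∧ u' = u * (u⁻¹ * u') := by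
  obtain ⟨m1, hm1, rfl⟩ := hu
  obtain ⟨m2, hm2, rfl⟩ := hu'
  constructor
  · have : (w * m1)⁻¹ * (w * m2) = m1⁻¹ * m2 := by group
    rw [this]
    exact N.mul_mem (N.inv_mem hm1) hm2
  · group

lemma nodescent_unique (hN : N = Subgroup.closure (RN cs N)) {u u' : W}
    (hu : ∃ m ∈ N, u = w * m) (hu' : ∃ m ∈ N, u' = w * m)
    (h1 : ∀ t ∈ RN cs N, eta cs u t = 1) (h2 : ∀ t ∈ RN cs N, eta cs u' t = 1) : u = u' := by
  by_contra hne
  obtain ⟨hnN, hdiff⟩ := coset_diff_mem N w hu hu'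
  set m := u⁻¹ * u' with hm
  have hm1 : m ≠ 1 := by
    intro h
    rw [h, mul_one] at hdiff
    exact hne hdiff.symm
  obtain ⟨t, htRN, hneg⟩ := exists_RN_descent cs N hN hnN hm1
  have e : eta cs (u * m) t = eta cs m t * eta cs u (m * t * m⁻¹) := eta_cocycle cs u m t
  have hconj : m * t * m⁻¹ ∈ RN cs N := conj_mem_RN cs N htRN hnN
  rw [h1 _ hconj, hneg, mul_one] at e
  rw [← hdiff] at e
  have := h2 t htRN
  rw [this] at e
  exact absurd e (by decide)

lemma noascent_unique (hN : N = Subgroup.closure (RN cs N)) {u u' : W}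
    (hu : ∃ m ∈ N, u = w * m) (hu' : ∃ m ∈ N, u' = w * m)
    (h1 : ∀ t ∈ RN cs N, eta cs u t = -1) (h2 : ∀ t ∈ RN cs N, eta cs u' t = -1) : u = u' := by
  by_contra hne
  obtain ⟨hnN, hdiff⟩ := coset_diff_mem N w hu hu'
  set m := u⁻¹ * u' with hm
  have hm1 : m ≠ 1 := by
    intro h
    rw [h, mul_one] at hdiff
    exact hne hdiff.symm
  obtain ⟨t, htRN, hneg⟩ := exists_RN_descent cs N hN hnN hm1
  have e : eta cs (u * m) t = eta cs m t * eta cs u (m * t * m⁻¹) := eta_cocycle cs u m t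
  have hconj : m * t * m⁻¹ ∈ RN cs N := conj_mem_RN cs N htRN hnN
  rw [h1 _ hconj, hneg] at e
  rw [← hdiff] at e
  have := h2 t htRN
  rw [this] at e
  exact absurd e (by decide)

end Coset

end Stmt12Aux

/-- Let `W` be a (finite) Coxeter group, `N` a reflection subgroup of `W`
(such as `W_{s'}°`), and `β = w·N` a coset of `N` (a block inside a transporter).  Then
`β`, with the Bruhat order induced from `W`, has a unique minimal element `w_β` and a
unique maximal element `w^β`. -/
theorem stmt12 {B W : Type*} [Group W] [Finite W] {M : CoxeterMatrix B}
    (cs : CoxeterSystem M W)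
    (N : Subgroup W)
    -- `N` is a reflection subgroup: it is generated by the reflections it contains
    (hN : N = Subgroup.closure {t : W | cs.IsReflection t ∧ t ∈ N})
    (w : W) :
    -- unique Bruhat-minimal element of the block `β = w·N`
    (∃! a : W, (∃ n ∈ N, a = w * n) ∧
      ∀ b : W, (∃ n ∈ N, b = w * n) → bruhatLE cs a b) ∧
    -- unique Bruhat-maximal element of the block `β = w·N`
    (∃! a : W, (∃ n ∈ N, a = w * n) ∧
      ∀ b : W, (∃ n ∈ N, b = w * n) → bruhatLE cs b a) := by
  classical
  open Stmt12Aux in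
  have hNRN : N = Subgroup.closure (RN cs N) := hN
  have hwC : ∃ n ∈ N, w = w * n := ⟨1, N.one_mem, by rw [mul_one]⟩
  constructor
  · -- minimum
    obtain ⟨a, haC, haND, _⟩ :=
      Stmt12Aux.exists_min_chain cs N w (cs.length w) w le_rfl hwC
    have hamin : ∀ b : W, (∃ n ∈ N, b = w * n) → bruhatLE cs a b := by
      intro b hb
      obtain ⟨b₀, hb₀C, hb₀ND, hb₀le⟩ :=
        Stmt12Aux.exists_min_chain cs N w (cs.length b) b le_rfl hb
      have : b₀ = a := Stmt12Aux.nodescent_unique cs N w hNRN hb₀C haC hb₀ND haND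
      rw [← this]
      exact hb₀le
    refine ⟨a, ⟨haC, hamin⟩, ?_⟩
    rintro y ⟨hyC, hymin⟩
    exact Stmt12Aux.bruhat_antisymm cs (hymin a haC) (hamin y hyC)
  · -- maximum
    haveI := Fintype.ofFinite W
    set K := Finset.univ.sup cs.length with hKdef
    have hK : ∀ v : W, cs.length v ≤ K := fun v => Finset.le_sup (Finset.mem_univ v)
    obtain ⟨a, haC, haNA, _⟩ :=
      Stmt12Aux.exists_max_chain cs N w K hK K w (by have := hK w; omega) hwC
    have hamax : ∀ b : W, (∃ n ∈ N, b = w * n) → bruhatLE cs b a := by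
      intro b hb
      obtain ⟨b₁, hb₁C, hb₁NA, hb₁le⟩ :=
        Stmt12Aux.exists_max_chain cs N w K hK K b (by have := hK b; omega) hb
      have : b₁ = a := Stmt12Aux.noascent_unique cs N w hNRN hb₁C haC hb₁NA haNA
      rw [← this]
      exact hb₁le
    refine ⟨a, ⟨haC, hamax⟩, ?_⟩
    rintro y ⟨hyC, hymax⟩
    exact Stmt12Aux.bruhat_antisymm cs (hamax y hyC) (hymax a haC)
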